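/- Let A ∈ ℝ^{n×n} be a nonsingular monotone matrix, A = P₁ − R₁ + S₁ a double weak regular splitting and A = P₂ − R₂ + S₂ a double regular splitting of A. Suppose I − S₂P₁⁻¹ and I + R₂P₁⁻¹ are nonsingular, Â⁻¹ ≥ 0 and 𝒜̂⁻¹ ≥ 0, where Â = (I − S₂P₁⁻¹)A and 𝒜̂ = (I + R₂P₁⁻¹)A. Setting P̂ = 𝒫̂ = P₂, R̂ = R₂ − S₂P₁⁻¹R₁ and ℛ̂ = R₂P₁⁻¹R₁ − S₂, if 𝒫̂⁻¹ℛ̂ ≥ P̂⁻¹R̂ and 𝒫̂⁻¹𝒜̂ ≥ P̂⁻¹Â, then ρ(𝒲₁₂) ≤ ρ(W₁₂) < 1, where W₁₂ = [[P₂⁻¹R₂ − P₂⁻¹S₂P₁⁻¹R₁, P₂⁻¹S₂P₁⁻¹S₁], [I, 0]] and 𝒲₁₂ = [[P₂⁻¹R₂P₁⁻¹R₁ − P₂⁻¹S₂, −P₂⁻¹R₂P₁⁻¹S₁], [I, 0]]. -/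

import Mathlib

open Matrix

/-- Spectral radius of a real square matrix: the maximum modulus of its complex eigenvalues. -/
noncomputable def specRad {ι : Type*} [Fintype ι] [DecidableEq ι] (M : Matrix ι ι ℝ) : ℝ :=
  sSup ((fun z : ℂ => ‖z‖) '' spectrum ℂ (M.map Complex.ofReal))

/-- `X` satisfies the four Penrose equations for `A`, i.e. `X` is the Moore-Penrose
inverse of `A`. -/
def IsMP {m n : ℕ} (A : Matrix (Fin m) (Fin n) ℝ) (X : Matrix (Fin n) (Fin m) ℝ) : Prop :=
  A * X * A = A ∧ X * A * X = X ∧ (A * X)ᵀ = A * X ∧ (X * A)ᵀ = X * A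

/-- Entrywise comparison of matrices: `MatLE A B` means `A ≤ B` entrywise. -/
def MatLE {m n : ℕ} (A B : Matrix (Fin m) (Fin n) ℝ) : Prop := ∀ i j, A i j ≤ B i j

open Matrix Filter Finset Topology
set_option linter.unusedSectionVars false
set_option linter.unusedVariables false
set_option maxHeartbeats 1000000

namespace SpecRadAux


attribute [local instance] Matrix.linftyOpNormedAddCommGroup Matrix.linftyOpNormedRing
  Matrix.linftyOpNormedAlgebra

variable {ι : Type*} [Fintype ι] [DecidableEq ι]

lemma entry_mul_nonneg {A B : Matrix ι ι ℝ} (hA : ∀ i j, 0 ≤ A i j) (hB : ∀ i j, 0 ≤ B i j) :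
    ∀ i j, 0 ≤ (A * B) i j := fun i j => by
  rw [Matrix.mul_apply]
  exact Finset.sum_nonneg fun k _ => mul_nonneg (hA i k) (hB k j)

lemma entry_mul_nonpos_left {A B : Matrix ι ι ℝ} (hA : ∀ i j, A i j ≤ 0) (hB : ∀ i j, 0 ≤ B i j) :
    ∀ i j, (A * B) i j ≤ 0 := fun i j => by
  rw [Matrix.mul_apply]
  exact Finset.sum_nonpos fun k _ => mul_nonpos_of_nonpos_of_nonneg (hA i k) (hB k j)

lemma entry_mul_nonpos_nonpos {A B : Matrix ι ι ℝ} (hA : ∀ i j, A i j ≤ 0)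
    (hB : ∀ i j, B i j ≤ 0) : ∀ i j, 0 ≤ (A * B) i j := fun i j => by
  rw [Matrix.mul_apply]
  exact Finset.sum_nonneg fun k _ => by nlinarith [hA i k, hB k j]

lemma entry_mul_nonneg_nonpos {A B : Matrix ι ι ℝ} (hA : ∀ i j, 0 ≤ A i j)
    (hB : ∀ i j, B i j ≤ 0) : ∀ i j, (A * B) i j ≤ 0 := fun i j => by
  rw [Matrix.mul_apply]
  exact Finset.sum_nonpos fun k _ => mul_nonpos_of_nonneg_of_nonpos (hA i k) (hB k j)

lemma entry_pow_nonneg {T : Matrix ι ι ℝ} (hT : ∀ i j, 0 ≤ T i j) (m : ℕ) :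
    ∀ i j, 0 ≤ (T ^ m) i j := by
  induction m with
  | zero => intro i j; by_cases h : i = j <;> simp [Matrix.one_apply, h]
  | succ m ih => rw [pow_succ]; exact entry_mul_nonneg ih hT

lemma mulVec_entry_nonneg {A : Matrix ι ι ℝ} {x : ι → ℝ} (hA : ∀ i j, 0 ≤ A i j)
    (hx : ∀ j, 0 ≤ x j) : ∀ i, 0 ≤ (A *ᵥ x) i := fun i =>
  Finset.sum_nonneg fun k _ => mul_nonneg (hA i k) (hx k)

lemma mulVec_mono {A : Matrix ι ι ℝ} {x y : ι → ℝ} (hA : ∀ i j, 0 ≤ A i j)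
    (hxy : ∀ j, x j ≤ y j) : ∀ i, (A *ᵥ x) i ≤ (A *ᵥ y) i := fun i =>
  Finset.sum_le_sum fun k _ => mul_le_mul_of_nonneg_left (hxy k) (hA i k)

lemma mulVec_mono_mat {A B : Matrix ι ι ℝ} {x : ι → ℝ} (hAB : ∀ i j, A i j ≤ B i j)
    (hx : ∀ j, 0 ≤ x j) : ∀ i, (A *ᵥ x) i ≤ (B *ᵥ x) i := fun i =>
  Finset.sum_le_sum fun k _ => mul_le_mul_of_nonneg_right (hAB i k) (hx k)

lemma row_sum_le_norm (M : Matrix ι ι ℝ) (i : ι) : ∑ j, |M i j| ≤ ‖M‖ := by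
  have h : (∑ j, ‖M i j‖₊) ≤ ‖M‖₊ := by
    rw [Matrix.linfty_opNNNorm_def]
    exact Finset.le_sup (f := fun i => ∑ j, ‖M i j‖₊) (Finset.mem_univ i)
  calc ∑ j, |M i j| = ((∑ j, ‖M i j‖₊ : NNReal) : ℝ) := by
        push_cast [coe_nnnorm, Real.norm_eq_abs]; ring
    _ ≤ ((‖M‖₊ : NNReal) : ℝ) := by exact_mod_cast h
    _ = ‖M‖ := rfl

lemma norm_le_sum_abs (M : Matrix ι ι ℝ) : ‖M‖ ≤ ∑ i, ∑ j, |M i j| := by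
  have h : ‖M‖₊ ≤ ∑ i, ∑ j, ‖M i j‖₊ := by
    rw [Matrix.linfty_opNNNorm_def]
    exact Finset.sup_le fun i _ =>
      Finset.single_le_sum (f := fun i => ∑ j, ‖M i j‖₊) (fun _ _ => zero_le) (Finset.mem_univ i)
  calc ‖M‖ = ((‖M‖₊ : NNReal) : ℝ) := rfl
    _ ≤ ((∑ i, ∑ j, ‖M i j‖₊ : NNReal) : ℝ) := by exact_mod_cast h
    _ = ∑ i, ∑ j, |M i j| := by push_cast [coe_nnnorm, Real.norm_eq_abs]; ring

lemma mapC_pow (M : Matrix ι ι ℝ) (m : ℕ) :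
    (M.map Complex.ofReal) ^ m = (M ^ m).map Complex.ofReal := by
  induction m with
  | zero => ext i j; by_cases h : i = j <;> simp [Matrix.map_apply, Matrix.one_apply, h]
  | succ m ih =>
      rw [pow_succ, pow_succ, ih]
      ext i j
      push_cast [Matrix.map_apply, Matrix.mul_apply]
      ring

lemma nnnorm_mapC (M : Matrix ι ι ℝ) : ‖M.map Complex.ofReal‖₊ = ‖M‖₊ := by
  rw [Matrix.linfty_opNNNorm_def, Matrix.linfty_opNNNorm_def]
  congr 1
  funext i
  congr 1
  funext j
  simp [Matrix.map_apply]

theorem eigvec {M : Matrix ι ι ℂ} {z : ℂ} (h : z ∈ spectrum ℂ M) :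
    ∃ v, v ≠ 0 ∧ M.mulVec v = z • v := by
  rw [spectrum.mem_iff, Matrix.isUnit_iff_isUnit_det, isUnit_iff_ne_zero, not_not] at h
  obtain ⟨v, hv, h0⟩ := (Matrix.exists_mulVec_eq_zero_iff).mpr h
  refine ⟨v, hv, ?_⟩
  have h1 : (algebraMap ℂ (Matrix ι ι ℂ)) z *ᵥ v - M *ᵥ v = 0 := by
    rw [← Matrix.sub_mulVec, h0]
  have h2 : (algebraMap ℂ (Matrix ι ι ℂ)) z *ᵥ v = z • v := by
    funext i
    simp [Matrix.algebraMap_eq_diagonal, Matrix.mulVec_diagonal]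
  rw [h2, sub_eq_zero] at h1
  exact h1.symm

lemma abs_le_norm_of_mem {M : Matrix ι ι ℂ} {z : ℂ} (h : z ∈ spectrum ℂ M) :
    ‖z‖ ≤ ‖M‖ := by
  obtain ⟨v, hv, hMv⟩ := eigvec h
  have hvn : 0 < ‖v‖ := norm_pos_iff.mpr hv
  have h1 : ‖M *ᵥ v‖ ≤ ‖M‖ * ‖v‖ := Matrix.linfty_opNorm_mulVec M v
  rw [hMv, norm_smul] at h1
  have h2 := le_of_mul_le_mul_right h1 hvn
  simpa using h2

lemma le_specRad_of_mem (M : Matrix ι ι ℝ) {z : ℂ}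
    (hz : z ∈ spectrum ℂ (M.map Complex.ofReal)) : ‖z‖ ≤ specRad M := by
  apply le_csSup
  · exact ⟨‖M.map Complex.ofReal‖, by rintro x ⟨w, hw, rfl⟩; exact abs_le_norm_of_mem hw⟩
  · exact Set.mem_image_of_mem _ hz

lemma specRad_exists [Nonempty ι] (M : Matrix ι ι ℝ) :
    ∃ z ∈ spectrum ℂ (M.map Complex.ofReal), specRad M = ‖z‖ := by
  have hne := spectrum.nonempty (M.map Complex.ofReal)
  have hcp := spectrum.isCompact (𝕜 := ℂ) (M.map Complex.ofReal)
  obtain ⟨z, hz, hmax⟩ := hcp.exists_isMaxOn hne continuous_norm.continuousOn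
  refine ⟨z, hz, le_antisymm (Real.sSup_le ?_ (norm_nonneg z)) (le_specRad_of_mem M hz)⟩
  rintro x ⟨w, hw, rfl⟩
  exact hmax hw

lemma specRad_nonneg [Nonempty ι] (M : Matrix ι ι ℝ) : 0 ≤ specRad M := by
  obtain ⟨z, _, hz⟩ := specRad_exists M
  rw [hz]
  exact norm_nonneg z

lemma specRad_of_isEmpty [IsEmpty ι] (M : Matrix ι ι ℝ) : specRad M = 0 := by
  haveI : Subsingleton (Matrix ι ι ℂ) := ⟨fun a b => by ext i j; exact isEmptyElim i⟩
  have hsp : spectrum ℂ (M.map Complex.ofReal) = ∅ := by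
    ext z
    simp [spectrum.mem_iff, isUnit_of_subsingleton]
  unfold specRad
  rw [hsp, Set.image_empty, Real.sSup_empty]

lemma pow_subinv {T : Matrix ι ι ℝ} (hT : ∀ i j, 0 ≤ T i j) {x : ι → ℝ} (hx : ∀ i, 0 ≤ x i)
    {t : ℝ} (ht : 0 ≤ t) (hsub : ∀ i, t * x i ≤ (T *ᵥ x) i) :
    ∀ m i, t ^ m * x i ≤ ((T ^ m) *ᵥ x) i := by
  intro m
  induction m with
  | zero => intro i; simp [Matrix.one_mulVec]
  | succ m ih =>
      intro i
      have hTm := entry_pow_nonneg hT m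
      have h2 : t * (t ^ m * x i) ≤ t * (((T ^ m) *ᵥ x) i) := mul_le_mul_of_nonneg_left (ih i) ht
      have h3 : t * (((T ^ m) *ᵥ x) i) = ((T ^ m) *ᵥ (t • x)) i := by
        rw [Matrix.mulVec_smul]
        simp
      have h4 : ((T ^ m) *ᵥ (t • x)) i ≤ ((T ^ m) *ᵥ (T *ᵥ x)) i :=
        mulVec_mono hTm (fun j => by simpa [smul_eq_mul] using hsub j) i
      have h5 : ((T ^ m) *ᵥ (T *ᵥ x)) i = ((T ^ (m + 1)) *ᵥ x) i := by
        rw [Matrix.mulVec_mulVec, ← pow_succ]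
      calc t ^ (m + 1) * x i = t * (t ^ m * x i) := by ring
        _ ≤ ((T ^ (m + 1)) *ᵥ x) i := by linarith

lemma le_specRad_of_subinv {N : Matrix ι ι ℝ} (hN : ∀ i j, 0 ≤ N i j) {x : ι → ℝ}
    (hx : ∀ i, 0 ≤ x i) (hx0 : x ≠ 0) {t : ℝ}
    (hsub : ∀ i, t * x i ≤ (N *ᵥ x) i) : t ≤ specRad N := by
  obtain ⟨i₀, hi₀⟩ := Function.ne_iff.mp hx0
  haveI : Nonempty ι := ⟨i₀⟩
  rcases le_or_gt t 0 with ht | ht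
  · exact ht.trans (specRad_nonneg N)
  have hxpos : 0 < ‖x‖ := norm_pos_iff.mpr hx0
  have hxi : 0 < x i₀ := (hx i₀).lt_of_ne (by simpa using (Ne.symm hi₀))
  have hpow := pow_subinv hN hx ht.le hsub
  have hb : ∀ m, t ^ m * x i₀ ≤ ‖N ^ m‖ * ‖x‖ := by
    intro m
    have h1 : ((N ^ m) *ᵥ x) i₀ ≤ ‖(N ^ m) *ᵥ x‖ := by
      have := norm_le_pi_norm ((N ^ m) *ᵥ x) i₀
      rw [Real.norm_eq_abs] at this
      exact (le_abs_self _).trans this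
    have h2 : ‖(N ^ m) *ᵥ x‖ ≤ ‖N ^ m‖ * ‖x‖ := Matrix.linfty_opNorm_mulVec _ _
    linarith [hpow m i₀]
  set c : ℝ := x i₀ / ‖x‖ with hc_def
  have hc : 0 < c := div_pos hxi hxpos
  have hfm : ∀ m, t ^ m * c ≤ ‖N ^ m‖ := by
    intro m
    rw [hc_def, mul_div_assoc' (t ^ m) (x i₀) ‖x‖, div_le_iff₀ hxpos]
    exact hb m
  -- Gelfand's formula gives the lower bound on the spectral radius
  have hG := spectrum.pow_nnnorm_pow_one_div_tendsto_nhds_spectralRadius (N.map Complex.ofReal)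
  have hterm : ∀ᶠ m : ℕ in atTop,
      ENNReal.ofReal (t * c ^ (1/(m:ℝ))) ≤ (‖(N.map Complex.ofReal) ^ m‖₊ : ENNReal) ^ (1/(m:ℝ)) := by
    filter_upwards [eventually_ge_atTop 1] with m hm
    have hm0 : (m : ℝ) ≠ 0 := Nat.cast_ne_zero.mpr (by omega)
    have h1 : ((‖(N.map Complex.ofReal) ^ m‖₊ : NNReal) : ENNReal) = ENNReal.ofReal ‖N ^ m‖ := by
      rw [mapC_pow, nnnorm_mapC]
      exact (ofReal_norm _).symm
    rw [h1, ENNReal.ofReal_rpow_of_nonneg (norm_nonneg _) (by positivity)]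
    apply ENNReal.ofReal_le_ofReal
    have h2 : t * c ^ (1/(m:ℝ)) = (t ^ m * c) ^ (1/(m:ℝ)) := by
      rw [Real.mul_rpow (by positivity) hc.le, ← Real.rpow_natCast t m, ← Real.rpow_mul ht.le]
      rw [mul_one_div, div_self hm0, Real.rpow_one]
    rw [h2]
    exact Real.rpow_le_rpow (by positivity) (hfm m) (by positivity)
  have hc1 : Tendsto (fun m : ℕ => c ^ (1/(m:ℝ))) atTop (𝓝 1) := by
    have h := Filter.Tendsto.rpow (tendsto_const_nhds (x := c) (f := atTop (α := ℕ)))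
      (by simpa using tendsto_one_div_atTop_nhds_zero_nat) (Or.inl hc.ne')
    simpa using h
  have hofReal : Tendsto (fun m : ℕ => ENNReal.ofReal (t * c ^ (1/(m:ℝ)))) atTop
      (𝓝 (ENNReal.ofReal t)) := by
    have h := hc1.const_mul t
    rw [mul_one] at h
    exact (ENNReal.continuous_ofReal.tendsto t).comp h
  have key : ENNReal.ofReal t ≤ spectralRadius ℂ (N.map Complex.ofReal) :=
    le_of_tendsto_of_tendsto hofReal hG hterm
  have h2 : spectralRadius ℂ (N.map Complex.ofReal) ≤ ENNReal.ofReal (specRad N) := by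
    rw [spectralRadius]
    refine iSup₂_le fun z hz => ?_
    refine le_trans (le_of_eq (ofReal_norm z).symm) ?_
    exact ENNReal.ofReal_le_ofReal (by simpa using le_specRad_of_mem N hz)
  exact (ENNReal.ofReal_le_ofReal_iff (specRad_nonneg N)).mp (key.trans h2)

lemma not_subinv_ge_one {T : Matrix ι ι ℝ} (hT : ∀ i j, 0 ≤ T i j) {k : ℕ} (hk : ‖T ^ k‖ < 1)
    {rv : ι → ℝ} (h0 : ∀ i, 0 ≤ rv i) (hne : rv ≠ 0) {t : ℝ} (ht : 1 ≤ t)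
    (hsub : ∀ i, t * rv i ≤ (T *ᵥ rv) i) : False := by
  obtain ⟨i₁, hi₁⟩ := Function.ne_iff.mp hne
  obtain ⟨i₀, _, hmax⟩ := Finset.exists_max_image Finset.univ rv ⟨i₁, Finset.mem_univ i₁⟩
  have hpos : 0 < rv i₀ :=
    lt_of_lt_of_le ((h0 i₁).lt_of_ne (by simpa using (Ne.symm hi₁))) (hmax i₁ (Finset.mem_univ i₁))
  have h1 : t ^ k * rv i₀ ≤ ((T ^ k) *ᵥ rv) i₀ :=
    pow_subinv hT h0 (zero_le_one.trans ht) hsub k i₀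
  have h2 : ((T ^ k) *ᵥ rv) i₀ ≤ ‖T ^ k‖ * rv i₀ := by
    have hTk := entry_pow_nonneg hT k
    calc ((T ^ k) *ᵥ rv) i₀ = ∑ j, (T ^ k) i₀ j * rv j := rfl
      _ ≤ ∑ j, (T ^ k) i₀ j * rv i₀ :=
          Finset.sum_le_sum fun j _ =>
            mul_le_mul_of_nonneg_left (hmax j (Finset.mem_univ j)) (hTk i₀ j)
      _ = (∑ j, (T ^ k) i₀ j) * rv i₀ := by rw [Finset.sum_mul]
      _ ≤ ‖T ^ k‖ * rv i₀ := by
          apply mul_le_mul_of_nonneg_right _ hpos.le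
          calc ∑ j, (T ^ k) i₀ j = ∑ j, |(T ^ k) i₀ j| := by
                refine Finset.sum_congr rfl fun j _ => (abs_of_nonneg (hTk i₀ j)).symm
            _ ≤ ‖T ^ k‖ := row_sum_le_norm _ i₀
  have h3 : 1 ≤ t ^ k := by
    calc (1:ℝ) = 1 ^ k := (one_pow k).symm
      _ ≤ t ^ k := pow_le_pow_left₀ zero_le_one ht k
  nlinarith

lemma exists_pow_norm_lt_one {T Q M G : Matrix ι ι ℝ} (hT : ∀ i j, 0 ≤ T i j)
    (hQ : ∀ i j, 0 ≤ Q i j) (hG : ∀ i j, 0 ≤ G i j) (hQM : Q * M = 1)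
    (hkey : ∀ k, (∑ m ∈ Finset.range k, T ^ m) * Q = G - T ^ k * G) :
    ∃ k, ‖T ^ k‖ < 1 := by
  have hf : ∀ i j k, ∑ m ∈ Finset.range k, (T ^ m * Q) i j ≤ G i j := by
    intro i j k
    have h1 : ∑ m ∈ Finset.range k, (T ^ m * Q) i j
        = ((∑ m ∈ Finset.range k, T ^ m) * Q) i j := by
      rw [Finset.sum_mul, Matrix.sum_apply]
    rw [h1, hkey k]
    have h2 : 0 ≤ (T ^ k * G) i j := entry_mul_nonneg (entry_pow_nonneg hT k) hG i j
    simp only [Matrix.sub_apply]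
    linarith
  have hsummable : ∀ i j, Tendsto (fun m => (T ^ m * Q) i j) atTop (𝓝 0) := fun i j =>
    (summable_of_sum_range_le
      (fun m => entry_mul_nonneg (entry_pow_nonneg hT m) hQ i j) (hf i j)).tendsto_atTop_zero
  have hentry : ∀ i j, Tendsto (fun m => (T ^ m) i j) atTop (𝓝 0) := by
    intro i j
    have h1 : ∀ m, (T ^ m) i j = ∑ l, (T ^ m * Q) i l * M l j := by
      intro m
      conv_lhs => rw [← mul_one (T ^ m), ← hQM, ← Matrix.mul_assoc]
      rw [Matrix.mul_apply]
    have h2 := tendsto_finset_sum (Finset.univ : Finset ι)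
      (fun l _ => (hsummable i l).mul_const (M l j))
    simp only [zero_mul, Finset.sum_const_zero] at h2
    exact h2.congr fun m => (h1 m).symm
  have hnorm : Tendsto (fun m => ‖T ^ m‖) atTop (𝓝 0) := by
    apply squeeze_zero (fun m => norm_nonneg _) (fun m => norm_le_sum_abs (T ^ m))
    have h2 := tendsto_finset_sum (Finset.univ : Finset ι)
      (fun i _ => tendsto_finset_sum (Finset.univ : Finset ι)
        (fun j _ => (hentry i j).abs))
    simpa using h2
  exact (hnorm.eventually_lt_const (by norm_num : (0:ℝ) < 1)).exists

lemma eig_blocks {B C : Matrix ι ι ℝ} (hB : ∀ i j, 0 ≤ B i j) (hC : ∀ i j, 0 ≤ C i j) {z : ℂ}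
    (hz : z ∈ spectrum ℂ
      ((Matrix.fromBlocks B C 1 0 : Matrix (ι ⊕ ι) (ι ⊕ ι) ℝ).map Complex.ofReal)) :
    ∃ rv : ι → ℝ, (∀ i, 0 ≤ rv i) ∧ rv ≠ 0 ∧
      ∀ i, (‖z‖) ^ 2 * rv i ≤ (‖z‖) * (B *ᵥ rv) i + (C *ᵥ rv) i := by
  have hmap : (Matrix.fromBlocks B C 1 0 : Matrix (ι ⊕ ι) (ι ⊕ ι) ℝ).map Complex.ofReal
      = Matrix.fromBlocks (B.map Complex.ofReal) (C.map Complex.ofReal)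
          (1 : Matrix ι ι ℂ) (0 : Matrix ι ι ℂ) := by
    rw [Matrix.fromBlocks_map]
    have h1 : (1 : Matrix ι ι ℝ).map Complex.ofReal = 1 := by
      ext i j
      by_cases h : i = j <;> simp [Matrix.map_apply, Matrix.one_apply, h]
    have h0 : (0 : Matrix ι ι ℝ).map Complex.ofReal = 0 := by
      ext i j
      simp [Matrix.map_apply]
    rw [h1, h0]
  rw [hmap] at hz
  obtain ⟨w, hw0, hww⟩ := eigvec hz
  set u : ι → ℂ := fun i => w (Sum.inl i) with hu_def
  set v : ι → ℂ := fun i => w (Sum.inr i) with hv_def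
  have hwe : w = Sum.elim u v := funext fun i => by cases i <;> rfl
  rw [hwe, Matrix.fromBlocks_mulVec] at hww
  have htop : ∀ i, ((B.map Complex.ofReal) *ᵥ u) i + ((C.map Complex.ofReal) *ᵥ v) i
      = z * u i := fun i => by
    have h := congrFun hww (Sum.inl i)
    rw [show ((u ⊕ᵥ v) ∘ Sum.inl) = u from rfl, show ((u ⊕ᵥ v) ∘ Sum.inr) = v from rfl] at h
    simpa using h
  have hbot : ∀ i, u i = z * v i := fun i => by
    have h := congrFun hww (Sum.inr i)
    simp only [Sum.elim_inr, Pi.add_apply, Pi.smul_apply, smul_eq_mul] at h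
    rw [show ((u ⊕ᵥ v) ∘ Sum.inl) = u from rfl, show ((u ⊕ᵥ v) ∘ Sum.inr) = v from rfl] at h
    rw [Matrix.one_mulVec, Matrix.zero_mulVec] at h
    simpa using h
  have hv0 : v ≠ 0 := by
    intro h
    apply hw0
    have hu0 : u = 0 := funext fun i => by
      rw [hbot i, show v i = 0 by rw [h]; rfl, mul_zero]
      rfl
    rw [hwe, hu0, h]
    funext i
    cases i <;> rfl
  refine ⟨fun i => ‖v i‖, fun i => norm_nonneg _, ?_, ?_⟩
  · intro h
    apply hv0
    funext i
    have := congrFun h i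
    simpa using this
  · intro i
    have heq : z * (z * v i) = z * ((B.map Complex.ofReal) *ᵥ v) i
        + ((C.map Complex.ofReal) *ᵥ v) i := by
      have h1 := htop i
      have h2 : (B.map Complex.ofReal) *ᵥ u = z • ((B.map Complex.ofReal) *ᵥ v) := by
        have : u = z • v := funext fun j => hbot j
        rw [this, Matrix.mulVec_smul]
      rw [h2, hbot i] at h1
      simpa [mul_comm] using h1.symm
    have habs : ‖z * (z * v i)‖ = (‖z‖) ^ 2 * ‖v i‖ := by
      rw [norm_mul, norm_mul]
      ring
    have hBle : ‖((B.map Complex.ofReal) *ᵥ v) i‖ ≤ (B *ᵥ fun j => ‖v j‖) i := by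
      calc ‖∑ j, (B.map Complex.ofReal) i j * v j‖
          ≤ ∑ j, ‖(B.map Complex.ofReal) i j * v j‖ := norm_sum_le _ _
        _ = ∑ j, B i j * ‖v j‖ := by
            refine Finset.sum_congr rfl fun j _ => ?_
            rw [norm_mul]; simp [Matrix.map_apply, abs_of_nonneg (hB i j)]
        _ = (B *ᵥ fun j => ‖v j‖) i := rfl
    have hCle : ‖((C.map Complex.ofReal) *ᵥ v) i‖ ≤ (C *ᵥ fun j => ‖v j‖) i := by
      calc ‖∑ j, (C.map Complex.ofReal) i j * v j‖
          ≤ ∑ j, ‖(C.map Complex.ofReal) i j * v j‖ := norm_sum_le _ _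
        _ = ∑ j, C i j * ‖v j‖ := by
            refine Finset.sum_congr rfl fun j _ => ?_
            rw [norm_mul]; simp [Matrix.map_apply, abs_of_nonneg (hC i j)]
        _ = (C *ᵥ fun j => ‖v j‖) i := rfl
    calc (‖z‖) ^ 2 * ‖v i‖
        = ‖z * (z * v i)‖ := habs.symm
      _ = ‖z * ((B.map Complex.ofReal) *ᵥ v) i + ((C.map Complex.ofReal) *ᵥ v) i‖ := by
          rw [heq]
      _ ≤ ‖z * ((B.map Complex.ofReal) *ᵥ v) i‖
          + ‖((C.map Complex.ofReal) *ᵥ v) i‖ := norm_add_le _ _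
      _ = ‖z‖ * ‖((B.map Complex.ofReal) *ᵥ v) i‖
          + ‖((C.map Complex.ofReal) *ᵥ v) i‖ := by rw [norm_mul]
      _ ≤ ‖z‖ * (B *ᵥ fun j => ‖v j‖) i
          + (C *ᵥ fun j => ‖v j‖) i := by
          have := mul_le_mul_of_nonneg_left hBle (norm_nonneg z)
          linarith [hCle]

end SpecRadAux

attribute [local instance] Matrix.linftyOpNormedAddCommGroup Matrix.linftyOpNormedRing
  Matrix.linftyOpNormedAlgebra

open SpecRadAux in
theorem htads_vs_tgads_comparison_nonsingular {n : ℕ}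
    (A P₁ R₁ S₁ P₂ R₂ S₂ : Matrix (Fin n) (Fin n) ℝ)
    (hA : IsUnit A.det)
    (hmono : MatLE 0 A⁻¹)
    (hP₁ : IsUnit P₁.det)
    (hP₂ : IsUnit P₂.det)
    (hsplit₁ : A = P₁ - R₁ + S₁)
    (hsplit₂ : A = P₂ - R₂ + S₂)
    (hwr₁a : MatLE 0 P₁⁻¹)
    (hwr₁b : MatLE 0 (P₁⁻¹ * R₁))
    (hwr₁c : MatLE (P₁⁻¹ * S₁) 0)
    (hreg₂a : MatLE 0 P₂⁻¹)
    (hreg₂b : MatLE 0 R₂)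
    (hreg₂c : MatLE S₂ 0)
    (hunitS : IsUnit (1 - S₂ * P₁⁻¹).det)
    (hunitR : IsUnit (1 + R₂ * P₁⁻¹).det)
    (hhat : MatLE 0 ((1 - S₂ * P₁⁻¹) * A)⁻¹)
    (hcal : MatLE 0 ((1 + R₂ * P₁⁻¹) * A)⁻¹)
    (hc1 : MatLE (P₂⁻¹ * (R₂ - S₂ * P₁⁻¹ * R₁)) (P₂⁻¹ * (R₂ * P₁⁻¹ * R₁ - S₂)))
    (hc2 : MatLE (P₂⁻¹ * ((1 - S₂ * P₁⁻¹) * A)) (P₂⁻¹ * ((1 + R₂ * P₁⁻¹) * A)))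
    : specRad (Matrix.fromBlocks (P₂⁻¹ * R₂ * P₁⁻¹ * R₁ - P₂⁻¹ * S₂) (-(P₂⁻¹ * R₂ * P₁⁻¹ * S₁)) 1 0) ≤ specRad (Matrix.fromBlocks (P₂⁻¹ * R₂ - P₂⁻¹ * S₂ * P₁⁻¹ * R₁) (P₂⁻¹ * S₂ * P₁⁻¹ * S₁) 1 0) ∧ specRad (Matrix.fromBlocks (P₂⁻¹ * R₂ - P₂⁻¹ * S₂ * P₁⁻¹ * R₁) (P₂⁻¹ * S₂ * P₁⁻¹ * S₁) 1 0) < 1 := by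
  classical
  rcases Nat.eq_zero_or_pos n with hn | hn
  · subst hn
    haveI : IsEmpty (Fin 0 ⊕ Fin 0) := by infer_instance
    rw [specRad_of_isEmpty, specRad_of_isEmpty]
    exact ⟨le_refl 0, by norm_num⟩
  haveI : Nonempty (Fin n) := ⟨⟨0, hn⟩⟩
  -- entrywise versions of the hypotheses
  have hmono' : ∀ i j, (0:ℝ) ≤ A⁻¹ i j := fun i j => by simpa using hmono i j
  have hwr₁a' : ∀ i j, (0:ℝ) ≤ P₁⁻¹ i j := fun i j => by simpa using hwr₁a i j
  have hwr₁b' : ∀ i j, (0:ℝ) ≤ (P₁⁻¹ * R₁) i j := fun i j => by simpa using hwr₁b i j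
  have hwr₁c' : ∀ i j, (P₁⁻¹ * S₁) i j ≤ (0:ℝ) := fun i j => by simpa using hwr₁c i j
  have hreg₂a' : ∀ i j, (0:ℝ) ≤ P₂⁻¹ i j := fun i j => by simpa using hreg₂a i j
  have hreg₂b' : ∀ i j, (0:ℝ) ≤ R₂ i j := fun i j => by simpa using hreg₂b i j
  have hreg₂c' : ∀ i j, S₂ i j ≤ (0:ℝ) := fun i j => by simpa using hreg₂c i j
  have hhat' : ∀ i j, (0:ℝ) ≤ ((1 - S₂ * P₁⁻¹) * A)⁻¹ i j := fun i j => by simpa using hhat i j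
  have hcal' : ∀ i j, (0:ℝ) ≤ ((1 + R₂ * P₁⁻¹) * A)⁻¹ i j := fun i j => by simpa using hcal i j
  have hP1 : P₁⁻¹ * P₁ = 1 := Matrix.nonsing_inv_mul P₁ hP₁
  have hP2 : P₂⁻¹ * P₂ = 1 := Matrix.nonsing_inv_mul P₂ hP₂
  have hP2' : P₂ * P₂⁻¹ = 1 := Matrix.mul_nonsing_inv P₂ hP₂
  set B₁ : Matrix (Fin n) (Fin n) ℝ := P₂⁻¹ * R₂ - P₂⁻¹ * S₂ * P₁⁻¹ * R₁ with hB₁def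
  set C₁ : Matrix (Fin n) (Fin n) ℝ := P₂⁻¹ * S₂ * P₁⁻¹ * S₁ with hC₁def
  set B₂ : Matrix (Fin n) (Fin n) ℝ := P₂⁻¹ * R₂ * P₁⁻¹ * R₁ - P₂⁻¹ * S₂ with hB₂def
  set C₂ : Matrix (Fin n) (Fin n) ℝ := -(P₂⁻¹ * R₂ * P₁⁻¹ * S₁) with hC₂def
  -- signs of the blocks
  have hPS : ∀ i j, (P₂⁻¹ * S₂) i j ≤ 0 := entry_mul_nonneg_nonpos hreg₂a' hreg₂c'
  have hPR : ∀ i j, 0 ≤ (P₂⁻¹ * R₂) i j := entry_mul_nonneg hreg₂a' hreg₂b'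
  have hB₁' : ∀ i j, 0 ≤ B₁ i j := by
    intro i j
    have h1 : P₂⁻¹ * S₂ * P₁⁻¹ * R₁ = (P₂⁻¹ * S₂) * (P₁⁻¹ * R₁) := by
      rw [Matrix.mul_assoc]
    have h2 := entry_mul_nonpos_left hPS hwr₁b' i j
    rw [hB₁def, Matrix.sub_apply, h1]
    linarith [hPR i j]
  have hC₁' : ∀ i j, 0 ≤ C₁ i j := by
    intro i j
    have h1 : C₁ = (P₂⁻¹ * S₂) * (P₁⁻¹ * S₁) := by
      rw [hC₁def, Matrix.mul_assoc]
    rw [h1]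
    exact entry_mul_nonpos_nonpos hPS hwr₁c' i j
  have hB₂' : ∀ i j, 0 ≤ B₂ i j := by
    intro i j
    have h1 : P₂⁻¹ * R₂ * P₁⁻¹ * R₁ = (P₂⁻¹ * R₂) * (P₁⁻¹ * R₁) := by
      rw [Matrix.mul_assoc]
    have h2 := entry_mul_nonneg hPR hwr₁b' i j
    rw [hB₂def, Matrix.sub_apply, h1]
    linarith [hPS i j]
  have hC₂' : ∀ i j, 0 ≤ C₂ i j := by
    intro i j
    have h1 : P₂⁻¹ * R₂ * P₁⁻¹ * S₁ = (P₂⁻¹ * R₂) * (P₁⁻¹ * S₁) := by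
      rw [Matrix.mul_assoc]
    have h2 := entry_mul_nonneg_nonpos hPR hwr₁c' i j
    rw [hC₂def, Matrix.neg_apply, h1]
    linarith
  set T₁ : Matrix (Fin n) (Fin n) ℝ := B₁ + C₁ with hT₁def
  set T₂ : Matrix (Fin n) (Fin n) ℝ := B₂ + C₂ with hT₂def
  have hT₁' : ∀ i j, 0 ≤ T₁ i j := fun i j => by
    rw [hT₁def, Matrix.add_apply]; linarith [hB₁' i j, hC₁' i j]
  have hT₂' : ∀ i j, 0 ≤ T₂ i j := fun i j => by
    rw [hT₂def, Matrix.add_apply]; linarith [hB₂' i j, hC₂' i j]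
  -- key algebraic identities
  have eA2 : P₂⁻¹ * A = 1 - P₂⁻¹ * R₂ + P₂⁻¹ * S₂ := by
    rw [hsplit₂, mul_add, mul_sub, hP2]
  have eA1 : P₁⁻¹ * A = 1 - P₁⁻¹ * R₁ + P₁⁻¹ * S₁ := by
    rw [hsplit₁, mul_add, mul_sub, hP1]
  have idA : P₂⁻¹ * ((1 - S₂ * P₁⁻¹) * A) = 1 - T₁ := by
    have h1 : P₂⁻¹ * ((1 - S₂ * P₁⁻¹) * A) = P₂⁻¹ * A - (P₂⁻¹ * S₂) * (P₁⁻¹ * A) := by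
      noncomm_ring
    rw [h1, eA1, eA2, hT₁def, hB₁def, hC₁def]
    noncomm_ring
  have idB : P₂⁻¹ * ((1 + R₂ * P₁⁻¹) * A) = 1 - T₂ := by
    have h1 : P₂⁻¹ * ((1 + R₂ * P₁⁻¹) * A) = P₂⁻¹ * A + (P₂⁻¹ * R₂) * (P₁⁻¹ * A) := by
      noncomm_ring
    rw [h1, eA1, eA2, hT₂def, hB₂def, hC₂def]
    noncomm_ring
  -- comparison of blocks
  have hc1' : ∀ i j, B₁ i j ≤ B₂ i j := by
    intro i j
    have e1 : P₂⁻¹ * (R₂ - S₂ * P₁⁻¹ * R₁) = B₁ := by rw [hB₁def]; noncomm_ring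
    have e2 : P₂⁻¹ * (R₂ * P₁⁻¹ * R₁ - S₂) = B₂ := by rw [hB₂def]; noncomm_ring
    have := hc1 i j
    rw [e1, e2] at this
    exact this
  have hT21 : ∀ i j, T₂ i j ≤ T₁ i j := by
    intro i j
    have := hc2 i j
    rw [idA, idB] at this
    simp only [Matrix.sub_apply] at this
    linarith
  have hC21 : ∀ i j, C₂ i j ≤ C₁ i j := by
    intro i j
    have h1 : T₁ i j = B₁ i j + C₁ i j := by rw [hT₁def, Matrix.add_apply]
    have h2 : T₂ i j = B₂ i j + C₂ i j := by rw [hT₂def, Matrix.add_apply]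
    linarith [hc1' i j, hT21 i j]
  -- Neumann-type bound giving small powers for T₁
  have hAhatdet : IsUnit ((1 - S₂ * P₁⁻¹) * A).det := by
    rw [Matrix.det_mul]; exact hunitS.mul hA
  have hAcaldet : IsUnit ((1 + R₂ * P₁⁻¹) * A).det := by
    rw [Matrix.det_mul]; exact hunitR.mul hA
  have hdet1 : IsUnit (1 - T₁).det := by
    rw [← idA, Matrix.det_mul]
    exact (Matrix.isUnit_nonsing_inv_det P₂ hP₂).mul hAhatdet
  have hdet2 : IsUnit (1 - T₂).det := by
    rw [← idB, Matrix.det_mul]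
    exact (Matrix.isUnit_nonsing_inv_det P₂ hP₂).mul hAcaldet
  have hGP1 : (1 - T₁)⁻¹ = ((1 - S₂ * P₁⁻¹) * A)⁻¹ * P₂ := by
    rw [← idA, Matrix.mul_inv_rev, Matrix.nonsing_inv_nonsing_inv P₂ hP₂]
  have hGP2 : (1 - T₂)⁻¹ = ((1 + R₂ * P₁⁻¹) * A)⁻¹ * P₂ := by
    rw [← idB, Matrix.mul_inv_rev, Matrix.nonsing_inv_nonsing_inv P₂ hP₂]
  have hkey : ∀ (T : Matrix (Fin n) (Fin n) ℝ) (G : Matrix (Fin n) (Fin n) ℝ),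
      IsUnit (1 - T).det → (1 - T)⁻¹ = G * P₂ →
      ∀ k, (∑ m ∈ Finset.range k, T ^ m) * P₂⁻¹ = G - T ^ k * G := by
    intro T G hdet hGP k
    have hgeom : (∑ m ∈ Finset.range k, T ^ m) * (1 - T) = 1 - T ^ k := by
      have h := geom_sum_mul T k
      calc (∑ m ∈ Finset.range k, T ^ m) * (1 - T)
          = -((∑ m ∈ Finset.range k, T ^ m) * (T - 1)) := by noncomm_ring
        _ = 1 - T ^ k := by rw [h]; noncomm_ring
    have hsum : (∑ m ∈ Finset.range k, T ^ m) = (1 - T ^ k) * (1 - T)⁻¹ := by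
      rw [← hgeom, Matrix.mul_assoc, Matrix.mul_nonsing_inv _ hdet, mul_one]
    rw [hsum, hGP, ← Matrix.mul_assoc, Matrix.mul_assoc ((1 - T ^ k) * G) P₂ P₂⁻¹,
      hP2', mul_one, sub_mul, one_mul]
  obtain ⟨k₁, hk₁⟩ := exists_pow_norm_lt_one hT₁' hreg₂a' hhat' hP2
    (hkey T₁ (((1 - S₂ * P₁⁻¹) * A)⁻¹) hdet1 hGP1)
  obtain ⟨k₂, hk₂⟩ := exists_pow_norm_lt_one hT₂' hreg₂a' hcal' hP2
    (hkey T₂ (((1 + R₂ * P₁⁻¹) * A)⁻¹) hdet2 hGP2)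
  -- all eigenvalues of both block matrices have modulus < 1
  have hlt : ∀ (B C T : Matrix (Fin n) (Fin n) ℝ), (∀ i j, 0 ≤ B i j) → (∀ i j, 0 ≤ C i j) →
      T = B + C → ∀ (k : ℕ), ‖T ^ k‖ < 1 →
      ∀ z ∈ spectrum ℂ ((Matrix.fromBlocks B C 1 0 :
        Matrix (Fin n ⊕ Fin n) (Fin n ⊕ Fin n) ℝ).map Complex.ofReal),
      ‖z‖ < 1 := by
    intro B C T hB hC hTdef k hk z hz
    by_contra hcon
    push_neg at hcon
    obtain ⟨rv, hrv0, hrvne, hq⟩ := eig_blocks hB hC hz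
    have hT : ∀ i j, 0 ≤ T i j := fun i j => by
      rw [hTdef, Matrix.add_apply]; linarith [hB i j, hC i j]
    have htpos : (0:ℝ) < ‖z‖ := lt_of_lt_of_le one_pos hcon
    have hsub : ∀ i, ‖z‖ * rv i ≤ (T *ᵥ rv) i := by
      intro i
      have h4 := hq i
      have h5 : (C *ᵥ rv) i ≤ ‖z‖ * (C *ᵥ rv) i :=
        le_mul_of_one_le_left (mulVec_entry_nonneg hC hrv0 i) hcon
      have h6 : (T *ᵥ rv) i = (B *ᵥ rv) i + (C *ᵥ rv) i := by
        rw [hTdef, Matrix.add_mulVec, Pi.add_apply]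
      have h7 : ‖z‖ * (‖z‖ * rv i) ≤ ‖z‖ * ((T *ᵥ rv) i) := by
        rw [h6, mul_add]
        nlinarith
      exact le_of_mul_le_mul_left h7 htpos
    exact not_subinv_ge_one hT hk hrv0 hrvne hcon hsub
  have hlt₁ := hlt B₁ C₁ T₁ hB₁' hC₁' hT₁def k₁ hk₁
  have hlt₂ := hlt B₂ C₂ T₂ hB₂' hC₂' hT₂def k₂ hk₂
  -- second conjunct
  have hsecond : specRad (Matrix.fromBlocks B₁ C₁ 1 0) < 1 := by
    obtain ⟨z, hz, heq⟩ := specRad_exists (Matrix.fromBlocks B₁ C₁ 1 0 :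
      Matrix (Fin n ⊕ Fin n) (Fin n ⊕ Fin n) ℝ)
    rw [heq]
    exact hlt₁ z hz
  refine ⟨?_, hsecond⟩
  -- first conjunct : comparison
  obtain ⟨z, hz, heq⟩ := specRad_exists (Matrix.fromBlocks B₂ C₂ 1 0 :
    Matrix (Fin n ⊕ Fin n) (Fin n ⊕ Fin n) ℝ)
  rw [heq]
  set t : ℝ := ‖z‖ with htdef
  have ht1 : t < 1 := hlt₂ z hz
  have ht0 : 0 ≤ t := norm_nonneg z
  obtain ⟨rv, hrv0, hrvne, hq⟩ := eig_blocks hB₂' hC₂' hz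
  have hmix : ∀ i, t ^ 2 * rv i ≤ t * (B₁ *ᵥ rv) i + (C₁ *ᵥ rv) i := by
    intro i
    have h1 := hq i
    have h2 : (T₂ *ᵥ rv) i ≤ (T₁ *ᵥ rv) i := mulVec_mono_mat hT21 hrv0 i
    have h3 : (C₂ *ᵥ rv) i ≤ (C₁ *ᵥ rv) i := mulVec_mono_mat hC21 hrv0 i
    have h4 : (T₂ *ᵥ rv) i = (B₂ *ᵥ rv) i + (C₂ *ᵥ rv) i := by
      rw [hT₂def, Matrix.add_mulVec, Pi.add_apply]
    have h5 : (T₁ *ᵥ rv) i = (B₁ *ᵥ rv) i + (C₁ *ᵥ rv) i := by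
      rw [hT₁def, Matrix.add_mulVec, Pi.add_apply]
    rw [h4, h5] at h2
    nlinarith [mul_le_mul_of_nonneg_left h2 ht0,
      mul_le_mul_of_nonneg_left h3 (sub_nonneg.mpr ht1.le)]
  set x : (Fin n ⊕ Fin n) → ℝ := Sum.elim (t • rv) rv with hxdef
  have hx0 : ∀ i, 0 ≤ x i := by
    intro i
    cases i with
    | inl i => exact mul_nonneg ht0 (hrv0 i)
    | inr i => exact hrv0 i
  have hxne : x ≠ 0 := by
    intro h
    apply hrvne
    funext i
    exact congrFun h (Sum.inr i)
  have hWnn : ∀ i j, (0:ℝ) ≤ (Matrix.fromBlocks B₁ C₁ 1 0 :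
      Matrix (Fin n ⊕ Fin n) (Fin n ⊕ Fin n) ℝ) i j := by
    intro i j
    cases i with
    | inl i =>
      cases j with
      | inl j => simpa using hB₁' i j
      | inr j => simpa using hC₁' i j
    | inr i =>
      cases j with
      | inl j =>
        simp only [Matrix.fromBlocks_apply₂₁]
        by_cases h : i = j <;> simp [Matrix.one_apply, h]
      | inr j => simp
  have hmulx : (Matrix.fromBlocks B₁ C₁ 1 0 :
      Matrix (Fin n ⊕ Fin n) (Fin n ⊕ Fin n) ℝ) *ᵥ x
      = Sum.elim (B₁ *ᵥ (t • rv) + C₁ *ᵥ rv) (1 *ᵥ (t • rv) + 0 *ᵥ rv) := by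
    rw [hxdef, Matrix.fromBlocks_mulVec]
    rfl
  have hsubx : ∀ i, t * x i ≤ ((Matrix.fromBlocks B₁ C₁ 1 0 :
      Matrix (Fin n ⊕ Fin n) (Fin n ⊕ Fin n) ℝ) *ᵥ x) i := by
    intro i
    rw [hmulx]
    cases i with
    | inl i =>
      have h1 : (B₁ *ᵥ (t • rv)) i = t * (B₁ *ᵥ rv) i := by
        rw [Matrix.mulVec_smul]; rfl
      have h2 := hmix i
      simp only [Sum.elim_inl, Pi.add_apply, h1]
      calc t * (Sum.elim (t • rv) rv (Sum.inl i)) = t ^ 2 * rv i := by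
            simp [Pi.smul_apply, smul_eq_mul]; ring
        _ ≤ t * (B₁ *ᵥ rv) i + (C₁ *ᵥ rv) i := h2
    | inr i =>
      have h1 : ((1 : Matrix (Fin n) (Fin n) ℝ) *ᵥ (t • rv) + (0 : Matrix (Fin n) (Fin n) ℝ) *ᵥ rv)
          = t • rv := by
        rw [Matrix.one_mulVec, Matrix.zero_mulVec, add_zero]
      rw [Sum.elim_inr, h1]
      simp [hxdef]
  exact le_specRad_of_subinv hWnn hx0 hxne hsubx
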